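/- Fix an integer N ≥ 2 and a real number q with 0 < q < 1. Let n ∈ {1, −1}, let m be an integer with |m| > 1, and let λ be a rational number such that either 2λ ∈ ℤ, or uλ ∈ ℤ for some positive divisor u of m or of m+n. Set s = q^{−Nλ} and t = q^{−Nn(1−λm)}. Then s^m t^n = q^{−N}, and for every x ∈ ℂ \ {0} at which all theta factors occurring are nonzero, Y_{m,n}(x;s,t) = 1. -/

import Mathlib

/-- Infinite `q`-Pochhammer symbol `(z;p)_∞ = ∏_{j≥0} (1 − z pʲ)`. -/
noncomputable def qPoch (z p : ℂ) : ℂ := ∏' j : ℕ, (1 - z * p ^ j)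

/-- Jacobi Θ function `Θ_p(z) = (z;p)_∞ (p z⁻¹;p)_∞ (p;p)_∞`. -/
noncomputable def ThetaF (p z : ℂ) : ℂ := qPoch z p * qPoch (p * z⁻¹) p * qPoch p p

/-- The function
`U(z) = q^{2/N−2} · Θ_{q^{2N}}(q²z²) Θ_{q^{2N}}(q²z⁻²) / (Θ_{q^{2N}}(z²) Θ_{q^{2N}}(z⁻²))`. -/
noncomputable def Ufun (N : ℕ) (q : ℝ) (z : ℂ) : ℂ :=
  ((q ^ ((2 : ℝ) / N - 2) : ℝ) : ℂ) *
    (ThetaF ((q : ℂ) ^ (2 * N)) ((q : ℂ) ^ 2 * z ^ 2) *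
      ThetaF ((q : ℂ) ^ (2 * N)) ((q : ℂ) ^ 2 * z⁻¹ ^ 2)) /
    (ThetaF ((q : ℂ) ^ (2 * N)) (z ^ 2) * ThetaF ((q : ℂ) ^ (2 * N)) (z⁻¹ ^ 2))

/-- All four theta factors occurring in `U(z)` are nonzero. -/
def thetaReg (N : ℕ) (q : ℝ) (z : ℂ) : Prop :=
  ThetaF ((q : ℂ) ^ (2 * N)) ((q : ℂ) ^ 2 * z ^ 2) ≠ 0 ∧
  ThetaF ((q : ℂ) ^ (2 * N)) ((q : ℂ) ^ 2 * z⁻¹ ^ 2) ≠ 0 ∧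
  ThetaF ((q : ℂ) ^ (2 * N)) (z ^ 2) ≠ 0 ∧
  ThetaF ((q : ℂ) ^ (2 * N)) (z⁻¹ ^ 2) ≠ 0

/-- `F_a(x;s) = ∏_{k=0}^{a−1} U(sᵏx)` for `a > 0`, `F₀ = 1`, and
`F_a(x;s) = ∏_{k=1}^{−a} U(s⁻ᵏx)⁻¹` for `a < 0`. -/
noncomputable def Ffun (N : ℕ) (q : ℝ) (s x : ℂ) (a : ℤ) : ℂ :=
  if 0 < a then ∏ k ∈ Finset.range a.toNat, Ufun N q (s ^ (k : ℕ) * x)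
  else ∏ k ∈ Finset.range (-a).toNat, (Ufun N q (s ^ (-(k : ℤ) - 1) * x))⁻¹

/-- The structure function
`Y_{m,n}(x;s,t) = F_n(x;t) F_{−n}(x;t) / (F_m(x;s) F_{−m}(x;s))`. -/
noncomputable def Yfun (N : ℕ) (q : ℝ) (s t x : ℂ) (m n : ℤ) : ℂ :=
  Ffun N q t x n * Ffun N q t x (-n) / (Ffun N q s x m * Ffun N q s x (-m))

open Filter Topology in
lemma multipliable_qPoch_term (z p : ℂ) (hp : ‖p‖ < 1) :
    Multipliable (fun j : ℕ => 1 - z * p ^ j) := by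
  by_cases hz : ∀ j : ℕ, 1 - z * p ^ j ≠ 0
  · have hlog : Summable (fun j : ℕ => Complex.log (1 - z * p ^ j)) := by
      have hgeo : Summable (fun j : ℕ => (3/2 : ℝ) * (‖z‖ * ‖p‖ ^ j)) :=
        ((summable_geometric_of_lt_one (norm_nonneg p) hp).mul_left _).mul_left _
      apply Summable.of_norm_bounded_eventually_nat hgeo
      have htend : Tendsto (fun j : ℕ => ‖z * p ^ j‖) atTop (𝓝 0) := by
        simpa using ((tendsto_pow_atTop_nhds_zero_of_norm_lt_one hp).const_mul z).norm
      filter_upwards [htend.eventually_le_const (by norm_num : (0:ℝ) < 1/2)] with j hj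
      have h1 : (1 : ℂ) - z * p ^ j = 1 + (-(z * p ^ j)) := by ring
      rw [h1]
      calc ‖Complex.log (1 + (-(z * p ^ j)))‖ ≤ 3/2 * ‖-(z * p ^ j)‖ :=
            Complex.norm_log_one_add_half_le_self (by simpa using hj)
        _ ≤ 3/2 * (‖z‖ * ‖p‖ ^ j) := by
            rw [norm_neg, norm_mul, norm_pow]
    exact Complex.multipliable_of_summable_log hlog
  · push_neg at hz
    obtain ⟨j, hj⟩ := hz
    refine ⟨0, ?_⟩
    have hev : ∀ᶠ S : Finset ℕ in atTop, (∏ i ∈ S, (1 - z * p ^ i)) = 0 := by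
      filter_upwards [eventually_ge_atTop ({j} : Finset ℕ)] with S hS
      exact Finset.prod_eq_zero (hS (Finset.mem_singleton_self j)) hj
    exact Filter.Tendsto.congr' (hev.mono fun S h => h.symm) tendsto_const_nhds

lemma qPoch_split (z p : ℂ) (hp : ‖p‖ < 1) :
    qPoch z p = (1 - z) * qPoch (p * z) p := by
  have hm : Multipliable (fun n : ℕ => (1 : ℂ) - z * p ^ (n + 1)) :=
    (multipliable_qPoch_term (p * z) p hp).congr fun n => by ring
  have h : ∏' j : ℕ, (1 - z * p ^ j)
      = (1 - z * p ^ 0) * ∏' j : ℕ, (1 - z * p ^ (j + 1)) := tprod_eq_zero_mul' hm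
  rw [qPoch, h, pow_zero, mul_one]
  congr 1
  rw [qPoch]
  exact tprod_congr fun j => by ring

lemma ThetaF_mul_p (p z : ℂ) (hp : ‖p‖ < 1) (hp0 : p ≠ 0) (hz : z ≠ 0) :
    ThetaF p (p * z) = -z⁻¹ * ThetaF p z := by
  have h1 : p * (p * z)⁻¹ = z⁻¹ := by field_simp
  rw [ThetaF, ThetaF, h1, qPoch_split z⁻¹ p hp, qPoch_split z p hp]
  have h2 : (1 : ℂ) - z⁻¹ = -z⁻¹ * (1 - z) := by field_simp; ring
  rw [h2]
  ring

lemma ThetaF_mul_p_inv (p z : ℂ) (hp : ‖p‖ < 1) (hp0 : p ≠ 0) (hz : z ≠ 0) :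
    ThetaF p (p⁻¹ * z) = -(p⁻¹ * z) * ThetaF p z := by
  have hz' : p⁻¹ * z ≠ 0 := mul_ne_zero (inv_ne_zero hp0) hz
  have h := ThetaF_mul_p p (p⁻¹ * z) hp hp0 hz'
  rw [show p * (p⁻¹ * z) = z by field_simp] at h
  rw [h]
  field_simp

section UfunLemmas
variable {N : ℕ} {q : ℝ}

lemma hp_norm (hN : 1 ≤ N) (hq0 : 0 < q) (hq1 : q < 1) : ‖(q : ℂ) ^ (2 * N)‖ < 1 := by
  rw [norm_pow, Complex.norm_real, Real.norm_eq_abs, abs_of_pos hq0]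
  exact pow_lt_one₀ hq0.le hq1 (by omega)

lemma Ufun_qN_mul (hN : 1 ≤ N) (hq0 : 0 < q) (hq1 : q < 1) (z : ℂ) (hz : z ≠ 0) :
    Ufun N q ((q : ℂ) ^ N * z) = Ufun N q z := by
  have hq : (q : ℂ) ≠ 0 := by
    simpa using hq0.ne'
  have hp0 : (q : ℂ) ^ (2 * N) ≠ 0 := pow_ne_zero _ hq
  have hp : ‖(q : ℂ) ^ (2 * N)‖ < 1 := hp_norm hN hq0 hq1
  set p : ℂ := (q : ℂ) ^ (2 * N) with hpdef
  set Q : ℂ := (q : ℂ) ^ N with hQdef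
  have hQ2 : Q ^ 2 = p := by rw [hQdef, hpdef, ← pow_mul, mul_comm]
  have hQ : Q ≠ 0 := pow_ne_zero _ hq
  have hz2 : z ^ 2 ≠ 0 := pow_ne_zero _ hz
  have hzi2 : (z⁻¹) ^ 2 ≠ 0 := pow_ne_zero _ (inv_ne_zero hz)
  have hqz : (q : ℂ) ^ 2 * z ^ 2 ≠ 0 := mul_ne_zero (pow_ne_zero _ hq) hz2
  have hqzi : (q : ℂ) ^ 2 * (z⁻¹) ^ 2 ≠ 0 := mul_ne_zero (pow_ne_zero _ hq) hzi2
  have e1 : (q : ℂ) ^ 2 * (Q * z) ^ 2 = p * ((q : ℂ) ^ 2 * z ^ 2) := by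
    rw [← hQ2]; ring
  have e2 : (q : ℂ) ^ 2 * ((Q * z)⁻¹) ^ 2 = p⁻¹ * ((q : ℂ) ^ 2 * (z⁻¹) ^ 2) := by
    rw [← hQ2]; field_simp
  have e3 : (Q * z) ^ 2 = p * z ^ 2 := by rw [← hQ2]; ring
  have e4 : ((Q * z)⁻¹) ^ 2 = p⁻¹ * (z⁻¹) ^ 2 := by rw [← hQ2]; field_simp
  rw [Ufun, Ufun, e1, e2, e3, e4,
    ThetaF_mul_p p _ hp hp0 hqz, ThetaF_mul_p_inv p _ hp hp0 hqzi,
    ThetaF_mul_p p _ hp hp0 hz2, ThetaF_mul_p_inv p _ hp hp0 hzi2]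
  set C : ℂ := ((q ^ ((2 : ℝ) / N - 2) : ℝ) : ℂ)
  set T1 : ℂ := ThetaF p ((q : ℂ) ^ 2 * z ^ 2)
  set T2 : ℂ := ThetaF p ((q : ℂ) ^ 2 * z⁻¹ ^ 2)
  set T3 : ℂ := ThetaF p (z ^ 2)
  set T4 : ℂ := ThetaF p (z⁻¹ ^ 2)
  have a_ne : (z ^ 2)⁻¹ * (p⁻¹ * (z⁻¹) ^ 2) ≠ 0 :=
    mul_ne_zero (inv_ne_zero hz2) (mul_ne_zero (inv_ne_zero hp0) hzi2)
  have num_eq : C * (-((q : ℂ) ^ 2 * z ^ 2)⁻¹ * T1 * (-(p⁻¹ * ((q : ℂ) ^ 2 * z⁻¹ ^ 2)) * T2))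
      = ((z ^ 2)⁻¹ * (p⁻¹ * (z⁻¹) ^ 2)) * (C * (T1 * T2)) := by
    field_simp
  have den_eq : -(z ^ 2)⁻¹ * T3 * (-(p⁻¹ * z⁻¹ ^ 2) * T4)
      = ((z ^ 2)⁻¹ * (p⁻¹ * (z⁻¹) ^ 2)) * (T3 * T4) := by ring
  rw [num_eq, den_eq, mul_div_mul_left _ _ a_ne]

lemma Ufun_qN_inv_mul (hN : 1 ≤ N) (hq0 : 0 < q) (hq1 : q < 1) (z : ℂ) (hz : z ≠ 0) :
    Ufun N q (((q : ℂ) ^ N)⁻¹ * z) = Ufun N q z := by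
  have hq : (q : ℂ) ≠ 0 := by simpa using hq0.ne'
  have hQ : (q : ℂ) ^ N ≠ 0 := pow_ne_zero _ hq
  have h := Ufun_qN_mul hN hq0 hq1 (((q : ℂ) ^ N)⁻¹ * z)
    (mul_ne_zero (inv_ne_zero hQ) hz)
  rw [show (q : ℂ) ^ N * (((q : ℂ) ^ N)⁻¹ * z) = z by field_simp] at h
  exact h.symm

lemma Ufun_qN_zpow_mul (hN : 1 ≤ N) (hq0 : 0 < q) (hq1 : q < 1) (k : ℤ) (z : ℂ) (hz : z ≠ 0) :
    Ufun N q (((q : ℂ) ^ N) ^ k * z) = Ufun N q z := by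
  have hq : (q : ℂ) ≠ 0 := by simpa using hq0.ne'
  have hQ : (q : ℂ) ^ N ≠ 0 := pow_ne_zero _ hq
  induction k using Int.induction_on with
  | zero => simp
  | succ i ih =>
      have hz' : ((q : ℂ) ^ N) ^ (i : ℤ) * z ≠ 0 := mul_ne_zero (zpow_ne_zero _ hQ) hz
      rw [show ((q : ℂ) ^ N) ^ ((i : ℤ) + 1) * z = (q : ℂ) ^ N * (((q : ℂ) ^ N) ^ (i : ℤ) * z) by
        rw [zpow_add_one₀ hQ]; ring]
      rw [Ufun_qN_mul hN hq0 hq1 _ hz', ih]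
  | pred i ih =>
      have hz' : ((q : ℂ) ^ N) ^ (-(i : ℤ)) * z ≠ 0 := mul_ne_zero (zpow_ne_zero _ hQ) hz
      rw [show ((q : ℂ) ^ N) ^ (-(i : ℤ) - 1) * z
          = ((q : ℂ) ^ N)⁻¹ * (((q : ℂ) ^ N) ^ (-(i : ℤ)) * z) by
        rw [zpow_sub_one₀ hQ]; ring]
      rw [Ufun_qN_inv_mul hN hq0 hq1 _ hz', ih]

lemma Ufun_rpow_shift (hN : 1 ≤ N) (hq0 : 0 < q) (hq1 : q < 1) (x : ℂ) (hx : x ≠ 0)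
    (a : ℝ) (k : ℤ) :
    Ufun N q (((q ^ (a + (N : ℝ) * (k : ℝ)) : ℝ) : ℂ) * x)
      = Ufun N q (((q ^ a : ℝ) : ℂ) * x) := by
  have hb : ((q ^ (a + (N : ℝ) * (k : ℝ)) : ℝ) : ℂ)
      = ((q : ℂ) ^ N) ^ k * ((q ^ a : ℝ) : ℂ) := by
    rw [Real.rpow_add hq0, Real.rpow_mul hq0.le, Real.rpow_natCast, Real.rpow_intCast]
    push_cast [Complex.ofReal_zpow]
    ring
  have hx' : ((q ^ a : ℝ) : ℂ) * x ≠ 0 :=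
    mul_ne_zero (by simpa using (Real.rpow_pos_of_pos hq0 a).ne') hx
  rw [hb, mul_assoc, Ufun_qN_zpow_mul hN hq0 hq1 k _ hx']

lemma Ufun_ne_zero (hq0 : 0 < q) (z : ℂ) (h : thetaReg N q z) :
    Ufun N q z ≠ 0 := by
  unfold thetaReg at h
  unfold Ufun
  obtain ⟨h1, h2, h3, h4⟩ := h
  have hC : (((q ^ ((2:ℝ)/N - 2) : ℝ)) : ℂ) ≠ 0 :=
    Complex.ofReal_ne_zero.mpr (Real.rpow_pos_of_pos hq0 _).ne'
  exact div_ne_zero (mul_ne_zero hC (mul_ne_zero h1 h2)) (mul_ne_zero h3 h4)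

lemma ofReal_rpow_zpow (hq0 : 0 < q) (a : ℝ) (k : ℤ) :
    (((q ^ a : ℝ) : ℂ)) ^ k = ((q ^ (a * (k : ℝ)) : ℝ) : ℂ) := by
  rw [← Complex.ofReal_zpow, ← Real.rpow_intCast (q ^ a) k, ← Real.rpow_mul hq0.le]

lemma ofReal_rpow_pow (hq0 : 0 < q) (a : ℝ) (k : ℕ) :
    (((q ^ a : ℝ) : ℂ)) ^ k = ((q ^ (a * (k : ℝ)) : ℝ) : ℂ) := by
  rw [← Complex.ofReal_pow, ← Real.rpow_natCast (q ^ a) k, ← Real.rpow_mul hq0.le]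

end UfunLemmas

lemma prod_shift_eq (f g : ℕ → ℂ) (K : ℕ) (hv : ∀ j k : ℕ, j + k = K + 1 → f j = g k) :
    ∏ k ∈ Finset.range K, f (k + 1) = ∏ k ∈ Finset.range K, g (k + 1) := by
  have h1 : ∏ k ∈ Finset.range K, f (k + 1) = ∏ k ∈ Finset.range K, g (K - k) :=
    Finset.prod_congr rfl fun k hk => hv _ _ (by
      have := Finset.mem_range.mp hk; omega)
  have h2 : ∏ k ∈ Finset.range K, g (K - 1 - k + 1) = ∏ k ∈ Finset.range K, g (k + 1) :=
    Finset.prod_range_reflect (fun k => g (k + 1)) K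
  rw [h1, ← h2]
  exact Finset.prod_congr rfl fun k hk => by
    have := Finset.mem_range.mp hk; congr 1; omega

lemma prod_shift_eq' (f g : ℕ → ℂ) (K : ℕ) (hv : ∀ j k : ℕ, j + k = K → f j = g k)
    (hK0 : f K = f 0) (h0 : f 0 ≠ 0) :
    ∏ k ∈ Finset.range K, f (k + 1) = ∏ k ∈ Finset.range K, g (k + 1) := by
  have hrefl : ∏ k ∈ Finset.range K, g (k + 1) = ∏ k ∈ Finset.range K, g (K - k) := by
    rw [← Finset.prod_range_reflect (fun k => g (k + 1)) K]
    exact Finset.prod_congr rfl fun k hk => by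
      have := Finset.mem_range.mp hk; congr 1; omega
  have h1 : ∏ k ∈ Finset.range K, g (K - k) = ∏ k ∈ Finset.range K, f k := by
    refine Finset.prod_congr rfl fun k hk => ?_
    have := Finset.mem_range.mp hk
    exact (hv k (K - k) (by omega)).symm
  have hrot : (∏ k ∈ Finset.range K, f (k + 1)) * f 0 = (∏ k ∈ Finset.range K, f k) * f 0 := by
    rw [← Finset.prod_range_succ' f K, Finset.prod_range_succ f K, hK0]
  rw [mul_right_cancel₀ h0 hrot, hrefl, h1]

/-- Abelianity -/
theorem Yfun_abelian_n_one (N : ℕ) (hN : 2 ≤ N) (q : ℝ) (hq0 : 0 < q) (hq1 : q < 1)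
    (m n : ℤ) (hn : n = 1 ∨ n = -1) (hm : 1 < |m|) (l : ℚ)
    (hl : (∃ k : ℤ, 2 * l = (k : ℚ)) ∨
          (∃ u : ℤ, 0 < u ∧ (u ∣ m ∨ u ∣ (m + n)) ∧ ∃ k : ℤ, (u : ℚ) * l = (k : ℚ)))
    (s t : ℂ)
    (hsdef : s = ((q ^ (-(N : ℝ) * (l : ℝ)) : ℝ) : ℂ))
    (htdef : t = ((q ^ (-(N : ℝ) * (n : ℝ) * (1 - (l : ℝ) * (m : ℝ))) : ℝ) : ℂ)) :
    s ^ m * t ^ n = (q : ℂ) ^ (-(N : ℤ)) ∧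
    ∀ x : ℂ, x ≠ 0 →
      (∀ k : ℤ, |k| ≤ |m| → thetaReg N q (s ^ k * x)) →
      (∀ k : ℤ, |k| ≤ |n| → thetaReg N q (t ^ k * x)) →
      Yfun N q s t x m n = 1 := by
  have hN1 : 1 ≤ N := by omega
  set σ : ℝ := -(N : ℝ) * (l : ℝ) with hσ
  set τ : ℝ := -(N : ℝ) * (n : ℝ) * (1 - (l : ℝ) * (m : ℝ)) with hτ
  -- the case data from hl
  have hcase : (∀ c : ℤ, 2 ∣ c → ∃ i : ℤ, (c : ℚ) * l = (i : ℚ)) ∨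
      (∃ i : ℤ, (m : ℚ) * l = (i : ℚ)) ∨ (∃ i : ℤ, ((m + n : ℤ) : ℚ) * l = (i : ℚ)) := by
    rcases hl with ⟨k, hk⟩ | ⟨u, hu0, hdvd, k, hk⟩
    · left
      rintro c ⟨d, rfl⟩
      exact ⟨d * k, by push_cast; linear_combination (d : ℚ) * hk⟩
    · rcases hdvd with ⟨e, he⟩ | ⟨e, he⟩
      · exact Or.inr (Or.inl ⟨e * k, by rw [he]; push_cast; linear_combination (e : ℚ) * hk⟩)
      · exact Or.inr (Or.inr ⟨e * k, by rw [he]; push_cast; linear_combination (e : ℚ) * hk⟩)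
  constructor
  · -- surface condition
    rw [hsdef, htdef, ofReal_rpow_zpow hq0, ofReal_rpow_zpow hq0, ← Complex.ofReal_mul,
      ← Real.rpow_add hq0]
    rw [show ((q : ℂ)) ^ (-(N : ℤ)) = ((q ^ (((-(N : ℤ)) : ℤ) : ℝ) : ℝ) : ℂ) by
      rw [Real.rpow_intCast, Complex.ofReal_zpow]]
    congr 1
    rcases hn with h | h <;> subst h <;> push_cast [hσ, hτ] <;> ring
  · -- abelianity
    intro x hx hS hT
    set P : ℝ → ℂ := fun a => Ufun N q (((q ^ a : ℝ) : ℂ) * x) with hPdef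
    have hPcong : ∀ a b : ℝ, (∃ k : ℤ, a = b + (N : ℝ) * (k : ℝ)) → P a = P b := by
      rintro a b ⟨k, rfl⟩
      simp only [hPdef]
      exact Ufun_rpow_shift hN1 hq0 hq1 x hx b k
    have hUs : ∀ k : ℤ, Ufun N q (s ^ k * x) = P (σ * (k : ℝ)) := by
      intro k
      rw [hsdef, ofReal_rpow_zpow hq0]
    have hUt : ∀ k : ℤ, Ufun N q (t ^ k * x) = P (τ * (k : ℝ)) := by
      intro k
      rw [htdef, ofReal_rpow_zpow hq0]
    have hPsne : ∀ k : ℤ, |k| ≤ |m| → P (σ * (k : ℝ)) ≠ 0 := by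
      intro k hk
      have h := Ufun_ne_zero hq0 _ (hS k hk)
      rwa [hUs k] at h
    set PA : ℕ → ℂ := fun k => P ((N : ℝ) * (l : ℝ) * (k : ℝ)) with hPAdef
    set PB : ℕ → ℂ := fun k => P (-((N : ℝ) * (l : ℝ) * (k : ℝ))) with hPBdef
    have hcast : ∀ c i : ℤ, ((c : ℚ) * l = (i : ℚ)) → (c : ℝ) * (l : ℝ) = (i : ℝ) := by
      intro c i h
      have h2 := congrArg (fun r : ℚ => (r : ℝ)) h
      push_cast at h2
      exact h2
    have hAB : ∀ j k : ℕ, (∃ i : ℤ, (((j : ℤ) + (k : ℤ) : ℤ) : ℚ) * l = (i : ℚ)) →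
        PA j = PB k := by
      rintro j k ⟨i, hi⟩
      have hr := hcast _ _ hi
      push_cast at hr
      simp only [hPAdef, hPBdef]
      refine hPcong _ _ ⟨i, ?_⟩
      push_cast
      linear_combination (N : ℝ) * hr
    have hAA : ∀ j k : ℕ, (∃ i : ℤ, (((j : ℤ) - (k : ℤ) : ℤ) : ℚ) * l = (i : ℚ)) →
        PA j = PA k := by
      rintro j k ⟨i, hi⟩
      have hr := hcast _ _ hi
      push_cast at hr
      simp only [hPAdef]
      refine hPcong _ _ ⟨i, ?_⟩
      push_cast
      linear_combination (N : ℝ) * hr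
    set M : ℕ := m.natAbs with hMdef
    have hMm : (M : ℤ) = |m| := (Int.abs_eq_natAbs m).symm
    have hM2 : 2 ≤ M := by
      have := hm; rw [← hMm] at this; omega
    obtain ⟨M', hM'⟩ : ∃ M', M = M' + 2 := ⟨M - 2, by omega⟩
    have hPAne : ∀ k : ℕ, k ≤ M → PA k ≠ 0 := by
      intro k hk
      have h := hPsne (-(k : ℤ)) (by rw [← hMm, abs_neg, Int.abs_natCast]; exact_mod_cast hk)
      simp only [hPAdef]
      rwa [show σ * ((-(k : ℤ) : ℤ) : ℝ) = (N : ℝ) * (l : ℝ) * (k : ℝ) by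
        push_cast [hσ]; ring] at h
    have hPBne : ∀ k : ℕ, k ≤ M → PB k ≠ 0 := by
      intro k hk
      have h := hPsne ((k : ℤ)) (by rw [← hMm, Int.abs_natCast]; exact_mod_cast hk)
      simp only [hPBdef]
      rwa [show σ * (((k : ℤ) : ℤ) : ℝ) = -((N : ℝ) * (l : ℝ) * (k : ℝ)) by
        push_cast [hσ]; ring] at h
    have hFpos : ∀ a : ℤ, 0 < a →
        Ffun N q s x a = ∏ k ∈ Finset.range a.toNat, PB k := by
      intro a ha
      unfold Ffun
      rw [if_pos ha]
      refine Finset.prod_congr rfl fun k _ => ?_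
      rw [show s ^ (k : ℕ) = s ^ ((k : ℕ) : ℤ) from (zpow_natCast s k).symm, hUs]
      simp only [hPBdef]
      rw [show σ * (((k : ℕ) : ℤ) : ℝ) = -((N : ℝ) * (l : ℝ) * (k : ℝ)) by
        push_cast [hσ]; ring]
    have hFneg : ∀ a : ℤ, a < 0 →
        Ffun N q s x a = ∏ k ∈ Finset.range (-a).toNat, (PA (k + 1))⁻¹ := by
      intro a ha
      unfold Ffun
      rw [if_neg (by omega)]
      refine Finset.prod_congr rfl fun k _ => ?_
      rw [hUs (-(k : ℤ) - 1)]
      simp only [hPAdef]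
      rw [show σ * ((-(k : ℤ) - 1 : ℤ) : ℝ) = (N : ℝ) * (l : ℝ) * ((k + 1 : ℕ) : ℝ) by
        push_cast [hσ]; ring]
    have hFt1 : Ffun N q t x 1 = P 0 := by
      unfold Ffun
      rw [if_pos (by norm_num : (0 : ℤ) < 1)]
      rw [show (1 : ℤ).toNat = 1 from rfl, Finset.prod_range_one]
      rw [show t ^ (0 : ℕ) = t ^ ((0 : ℤ)) from by norm_num, hUt 0]
      norm_num
    have hFtneg : Ffun N q t x (-1) = (P (-τ))⁻¹ := by
      unfold Ffun
      rw [if_neg (by norm_num : ¬ (0 : ℤ) < -1)]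
      rw [show (-(-1 : ℤ)).toNat = 1 from rfl, Finset.prod_range_one]
      rw [show (-((0 : ℕ) : ℤ) - 1) = (-1 : ℤ) from by norm_num, hUt (-1)]
      rw [show τ * (((-1 : ℤ)) : ℝ) = -τ from by push_cast; ring]
    have hNum : Ffun N q t x n * Ffun N q t x (-n) = P 0 * (P (-τ))⁻¹ := by
      rcases hn with h | h <;> subst h
      · rw [hFt1, hFtneg]
      · rw [neg_neg, hFt1, hFtneg]; ring
    have hDen : Ffun N q s x m * Ffun N q s x (-m)
        = (∏ k ∈ Finset.range M, PB k) * (∏ k ∈ Finset.range M, (PA (k + 1))⁻¹) := by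
      rcases lt_trichotomy m 0 with hlt | heq | hgt
      · rw [hFneg m hlt, hFpos (-m) (by omega), show (-m).toNat = M from by omega]
        ring
      · exfalso; omega
      · rw [hFpos m hgt, hFneg (-m) (by omega), show m.toNat = M from by omega,
          show (- -m).toNat = M from by omega]
    have hP0B : P 0 = PB 0 := by
      simp only [hPBdef]
      norm_num
    have hPt : P (-τ) ≠ 0 := by
      have h := Ufun_ne_zero hq0 _ (hT (-1) (by rcases hn with h | h <;> subst h <;> simp))
      rw [hUt (-1)] at h
      rwa [show τ * (((-1 : ℤ)) : ℝ) = -τ from by push_cast; ring] at h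
    have hfinish : P 0 * ∏ k ∈ Finset.range M, PA (k + 1)
        = P (-τ) * ∏ k ∈ Finset.range M, PB k → Yfun N q s t x m n = 1 := by
      intro key
      have hBprod : (∏ k ∈ Finset.range M, PA (k + 1)) ≠ 0 :=
        Finset.prod_ne_zero_iff.mpr fun k hk =>
          hPAne (k + 1) (by have := Finset.mem_range.mp hk; omega)
      have hAprod : (∏ k ∈ Finset.range M, PB k) ≠ 0 :=
        Finset.prod_ne_zero_iff.mpr fun k hk =>
          hPBne k (by have := Finset.mem_range.mp hk; omega)
      have hP0 : P 0 ≠ 0 := by rw [hP0B]; exact hPBne 0 (by omega)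
      rw [Yfun, hNum, hDen, Finset.prod_inv_distrib]
      rw [div_eq_one_iff_eq (mul_ne_zero hAprod (inv_ne_zero hBprod))]
      field_simp
      linear_combination key
    have step1 : P (-τ) = P (-((N : ℝ) * (l : ℝ) * ((n * m : ℤ) : ℝ))) := by
      refine hPcong _ _ ⟨n, ?_⟩
      push_cast [hτ]
      ring
    have hε : n * m = (M : ℤ) ∨ n * m = -(M : ℤ) := by
      rcases hn with h | h <;> subst h <;> omega
    rcases hε with hnm | hnm
    · -- n*m = M
      apply hfinish
      have step2 : P (-τ) = PB M := by
        rw [step1, hnm]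
        simp only [hPBdef]
        norm_num
      have hcore : ∏ k ∈ Finset.range M, PA (k + 1) = ∏ k ∈ Finset.range M, PB (k + 1) := by
        rcases hcase with h2 | hZm | hZmn
        · exact Finset.prod_congr rfl fun k _ =>
            hAB (k + 1) (k + 1) (h2 _ ⟨((k + 1 : ℕ) : ℤ), by ring⟩)
        · -- u ∣ m : congruence modulo M, case c = K
          have hZM : ∃ i : ℤ, ((M : ℤ) : ℚ) * l = (i : ℚ) := by
            obtain ⟨i, hi⟩ := hZm
            rcases (by omega : m = (M : ℤ) ∨ m = -(M : ℤ)) with h | h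
            · exact ⟨i, by rw [← h]; exact hi⟩
            · refine ⟨-i, ?_⟩
              have hMQ : ((M : ℤ) : ℚ) = -((m : ℚ)) := by
                exact_mod_cast (by omega : (M : ℤ) = -m)
              rw [hMQ]; push_cast; linear_combination -hi
          refine prod_shift_eq' PA PB M (fun j k hjk => hAB j k ?_) (hAA M 0 ?_)
            (hPAne 0 (by omega))
          · obtain ⟨i, hi⟩ := hZM
            exact ⟨i, by rw [show (j : ℤ) + (k : ℤ) = (M : ℤ) from by omega]; exact hi⟩
          · obtain ⟨i, hi⟩ := hZM
            exact ⟨i, by rw [show (M : ℤ) - ((0 : ℕ) : ℤ) = (M : ℤ) from by omega]; exact hi⟩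
        · -- u ∣ m + n, with n*m = M : congruence modulo M + 1, case c = K + 1
          have hZ : ∃ i : ℤ, (((M : ℤ) + 1) : ℚ) * l = (i : ℚ) := by
            obtain ⟨i, hi⟩ := hZmn
            push_cast at hi
            rcases (by rcases hn with h | h <;> subst h <;> omega :
                m + n = (M : ℤ) + 1 ∨ m + n = -((M : ℤ) + 1)) with h | h
            · have hc : (m : ℚ) + (n : ℚ) = ((M : ℤ) : ℚ) + 1 := by exact_mod_cast h
              exact ⟨i, by push_cast; linear_combination hi - l * hc⟩
            · have hc : (m : ℚ) + (n : ℚ) = -(((M : ℤ) : ℚ) + 1) := by exact_mod_cast h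
              exact ⟨-i, by push_cast; linear_combination -hi + l * hc⟩
          refine prod_shift_eq PA PB M (fun j k hjk => hAB j k ?_)
          obtain ⟨i, hi⟩ := hZ
          refine ⟨i, ?_⟩
          rw [show ((j : ℤ) + (k : ℤ) : ℤ) = (M : ℤ) + 1 from by omega]
          push_cast
          push_cast at hi
          exact hi
      rw [hP0B, hcore, step2, hM']
      simp only [show M' + 2 = M' + 1 + 1 from rfl]
      rw [Finset.prod_range_succ (fun k => PB (k + 1)) (M' + 1),
        Finset.prod_range_succ' PB (M' + 1)]
      ring
    · -- n*m = -M
      apply hfinish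
      have step2 : P (-τ) = PA M := by
        rw [step1, hnm]
        simp only [hPAdef]
        norm_num
      have hcore : ∏ k ∈ Finset.range (M' + 1), PA (k + 1)
          = ∏ k ∈ Finset.range (M' + 1), PB (k + 1) := by
        rcases hcase with h2 | hZm | hZmn
        · exact Finset.prod_congr rfl fun k _ =>
            hAB (k + 1) (k + 1) (h2 _ ⟨((k + 1 : ℕ) : ℤ), by ring⟩)
        · -- u ∣ m : congruence modulo M = K + 1
          have hZM : ∃ i : ℤ, ((M : ℤ) : ℚ) * l = (i : ℚ) := by
            obtain ⟨i, hi⟩ := hZm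
            rcases (by omega : m = (M : ℤ) ∨ m = -(M : ℤ)) with h | h
            · exact ⟨i, by rw [← h]; exact hi⟩
            · refine ⟨-i, ?_⟩
              have hMQ : ((M : ℤ) : ℚ) = -((m : ℚ)) := by
                exact_mod_cast (by omega : (M : ℤ) = -m)
              rw [hMQ]; push_cast; linear_combination -hi
          refine prod_shift_eq PA PB (M' + 1) (fun j k hjk => hAB j k ?_)
          obtain ⟨i, hi⟩ := hZM
          exact ⟨i, by rw [show (j : ℤ) + (k : ℤ) = (M : ℤ) from by omega]; exact hi⟩
        · -- u ∣ m + n, with n*m = -M : congruence modulo M - 1 = K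
          have hZ : ∃ i : ℤ, (((M' : ℤ) + 1) : ℚ) * l = (i : ℚ) := by
            obtain ⟨i, hi⟩ := hZmn
            push_cast at hi
            rcases (by rcases hn with h | h <;> subst h <;> omega :
                m + n = (M' : ℤ) + 1 ∨ m + n = -((M' : ℤ) + 1)) with h | h
            · have hc : (m : ℚ) + (n : ℚ) = ((M' : ℤ) : ℚ) + 1 := by exact_mod_cast h
              exact ⟨i, by push_cast; linear_combination hi - l * hc⟩
            · have hc : (m : ℚ) + (n : ℚ) = -(((M' : ℤ) : ℚ) + 1) := by exact_mod_cast h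
              exact ⟨-i, by push_cast; linear_combination -hi + l * hc⟩
          refine prod_shift_eq' PA PB (M' + 1) (fun j k hjk => hAB j k ?_)
            (hAA (M' + 1) 0 ?_) (hPAne 0 (by omega))
          · obtain ⟨i, hi⟩ := hZ
            refine ⟨i, ?_⟩
            rw [show ((j : ℤ) + (k : ℤ) : ℤ) = (M' : ℤ) + 1 from by omega]
            push_cast
            push_cast at hi
            exact hi
          · obtain ⟨i, hi⟩ := hZ
            refine ⟨i, ?_⟩
            rw [show (((M' + 1 : ℕ) : ℤ) - ((0 : ℕ) : ℤ) : ℤ) = (M' : ℤ) + 1 from by omega]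
            push_cast
            push_cast at hi
            exact hi
      rw [hP0B, step2, hM']
      simp only [show M' + 2 = M' + 1 + 1 from rfl]
      rw [Finset.prod_range_succ (fun k => PA (k + 1)) (M' + 1),
        Finset.prod_range_succ' PB (M' + 1), hcore]
      ring
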